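/- Let γ : ℝ → ℝ³ be a non-degenerate C² curve on S² and let f_z (for z ∈ ℝ³) be the associated projection maps. There exist constants 0 < c₀ ≤ C₀ < ∞ depending only on γ such that for all y, z ∈ ℝ³ with |y| ≤ 1/2 and |z| ≤ 1/2: (i) |f_y(θ) − f_z(θ)| + |f_y'(θ) − f_z'(θ)| ≥ c₀ |y − z| for every θ ∈ [0,1]; and (ii) |f_y(θ) − f_z(θ)| + |f_y'(θ) − f_z'(θ)| ≤ C₀ |y − z| for every θ ∈ [0,1]. In particular the family {f_z : |z| ≤ 1/2} is a cinematic family of maps, bi-Lipschitz homeomorphic to the ball B(0,1/2). -/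

import Mathlib

open MeasureTheory Set
open scoped ENNReal NNReal

/-- The cross product on `ℝ³ = EuclideanSpace ℝ (Fin 3)`. -/
noncomputable def cross3 (a b : EuclideanSpace ℝ (Fin 3)) : EuclideanSpace ℝ (Fin 3) :=
  (EuclideanSpace.equiv (Fin 3) ℝ).symm
    ![a 1 * b 2 - a 2 * b 1, a 2 * b 0 - a 0 * b 2, a 0 * b 1 - a 1 * b 0]

/-- For a curve `γ` on `S²`, normalisation constant `M`, and `z ∈ ℝ³`, the projection map
`f_z(θ) = (⟨z, γ'(θ)/M⟩, ⟨z, ν(θ)⟩)` where `ν(θ) = γ(θ) × γ'(θ)/|γ'(θ)|`. -/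
noncomputable def fmap (γ : ℝ → EuclideanSpace ℝ (Fin 3)) (M : ℝ)
    (z : EuclideanSpace ℝ (Fin 3)) (θ : ℝ) : EuclideanSpace ℝ (Fin 2) :=
  (EuclideanSpace.equiv (Fin 2) ℝ).symm
    ![(inner ℝ z (M⁻¹ • deriv γ θ) : ℝ),
      (inner ℝ z ((‖deriv γ θ‖)⁻¹ • cross3 (γ θ) (deriv γ θ)) : ℝ)]

section aux

local notation "E3" => EuclideanSpace ℝ (Fin 3)

lemma inner3 (a b : E3) : (inner ℝ a b : ℝ) = a 0 * b 0 + a 1 * b 1 + a 2 * b 2 := by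
  simp [PiLp.inner_apply, Fin.sum_univ_three, RCLike.inner_apply]; ring

lemma cross3_zero (a b : E3) : cross3 a b 0 = a 1 * b 2 - a 2 * b 1 := rfl
lemma cross3_one (a b : E3) : cross3 a b 1 = a 2 * b 0 - a 0 * b 2 := rfl
lemma cross3_two (a b : E3) : cross3 a b 2 = a 0 * b 1 - a 1 * b 0 := rfl

lemma lagrange3 (a b : E3) : (inner ℝ (cross3 a b) (cross3 a b) : ℝ) =
    (inner ℝ a a : ℝ) * (inner ℝ b b : ℝ) - (inner ℝ a b : ℝ) * (inner ℝ a b : ℝ) := by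
  simp only [inner3, cross3_zero, cross3_one, cross3_two]; ring

lemma e3_ext (x y : E3) (h0 : x 0 = y 0) (h1 : x 1 = y 1) (h2 : x 2 = y 2) : x = y := by
  ext i
  fin_cases i <;> assumption

lemma cross3_triple (u a b : E3) :
    cross3 u (cross3 a b) = (inner ℝ u b : ℝ) • a - (inner ℝ u a : ℝ) • b := by
  refine e3_ext _ _ ?_ ?_ ?_ <;>
    simp only [cross3_zero, cross3_one, cross3_two, inner3, PiLp.sub_apply, PiLp.smul_apply,
      smul_eq_mul] <;> ring

lemma inner_self_cross3 (a b : E3) : (inner ℝ a (cross3 a b) : ℝ) = 0 := by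
  simp only [inner3, cross3_zero, cross3_one, cross3_two]; ring

lemma inner_right_cross3 (a b : E3) : (inner ℝ b (cross3 a b) : ℝ) = 0 := by
  simp only [inner3, cross3_zero, cross3_one, cross3_two]; ring

lemma perp3 (a b w : E3) (ha : ‖a‖ = 1) (hab : (inner ℝ a b : ℝ) = 0) (hb : b ≠ 0)
    (h1 : (inner ℝ w b : ℝ) = 0) (h2 : (inner ℝ w (cross3 a b) : ℝ) = 0) :
    w = (inner ℝ w a : ℝ) • a := by
  set c : ℝ := inner ℝ w a with hc
  set u : E3 := w - c • a with hu
  have haa : (inner ℝ a a : ℝ) = 1 := by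
    rw [real_inner_self_eq_norm_mul_norm, ha]; norm_num
  have hua : (inner ℝ u a : ℝ) = 0 := by
    rw [hu, inner_sub_left, real_inner_smul_left, haa, mul_one, hc, sub_self]
  have hub : (inner ℝ u b : ℝ) = 0 := by
    rw [hu, inner_sub_left, real_inner_smul_left, hab, mul_zero, h1, sub_zero]
  have huc : (inner ℝ u (cross3 a b) : ℝ) = 0 := by
    rw [hu, inner_sub_left, real_inner_smul_left, inner_self_cross3, mul_zero, h2, sub_zero]
  have hcc : cross3 u (cross3 a b) = 0 := by
    rw [cross3_triple, hub, hua]; simp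
  have hL := lagrange3 u (cross3 a b)
  rw [hcc, huc] at hL
  simp only [inner_zero_left, mul_zero, sub_zero] at hL
  have hcab : (0:ℝ) < (inner ℝ (cross3 a b) (cross3 a b) : ℝ) := by
    rw [lagrange3 a b, haa, hab, real_inner_self_eq_norm_sq]
    have : (0:ℝ) < ‖b‖ := norm_pos_iff.mpr hb
    nlinarith
  have huu : (inner ℝ u u : ℝ) = 0 := by
    rcases mul_eq_zero.mp hL.symm with h | h
    · exact h
    · exact absurd h (ne_of_gt hcab)
  have : u = 0 := inner_self_eq_zero.mp huu
  have := sub_eq_zero.mp (hu ▸ this)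
  rw [this]

/-- The linear-in-`w` pairing underlying `fmap`. -/
noncomputable def pmap (u v w : E3) : EuclideanSpace ℝ (Fin 2) :=
  (EuclideanSpace.equiv (Fin 2) ℝ).symm ![(inner ℝ w u : ℝ), (inner ℝ w v : ℝ)]

lemma pmap_sub (u v y z : E3) : pmap u v y - pmap u v z = pmap u v (y - z) := by
  unfold pmap
  rw [← map_sub]
  congr 1
  funext i
  fin_cases i <;> simp [inner_sub_left]

lemma pmap_smul (u v : E3) (c : ℝ) (w : E3) : pmap u v (c • w) = c • pmap u v w := by
  unfold pmap
  rw [← _root_.map_smul]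
  congr 1
  funext i
  fin_cases i <;> simp [real_inner_smul_left, Finset.mul_sum, mul_assoc]

lemma pmap_eq_zero {u v w : E3} (h : pmap u v w = 0) :
    (inner ℝ w u : ℝ) = 0 ∧ (inner ℝ w v : ℝ) = 0 := by
  have h' := congrArg (EuclideanSpace.equiv (Fin 2) ℝ) h
  simp only [pmap, ContinuousLinearEquiv.apply_symm_apply, map_zero] at h'
  constructor
  · have := congrFun h' 0; simpa using this
  · have := congrFun h' 1; simpa using this

lemma pmap_cont : Continuous (fun p : E3 × E3 × E3 => pmap p.1 p.2.1 p.2.2) := by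
  unfold pmap
  refine ((EuclideanSpace.equiv (Fin 2) ℝ).symm.continuous.comp ?_)
  refine continuous_pi fun i => ?_
  fin_cases i
  · simpa using (continuous_snd.comp continuous_snd).inner continuous_fst
  · simpa using (continuous_snd.comp continuous_snd).inner (continuous_fst.comp continuous_snd)

/-- `ν` as a function. -/
noncomputable def Ncv (γ : ℝ → E3) (θ : ℝ) : E3 :=
  (‖deriv γ θ‖)⁻¹ • cross3 (γ θ) (deriv γ θ)

lemma fmap_eq (γ : ℝ → E3) (M : ℝ) (z : E3) (θ : ℝ) :
    fmap γ M z θ = pmap (M⁻¹ • deriv γ θ) (Ncv γ θ) z := rfl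

lemma fmap_hasDerivAt (γ : ℝ → E3) (M : ℝ) (w : E3) (θ : ℝ) (u' v' : E3)
    (hE : HasDerivAt (fun t => M⁻¹ • deriv γ t) u' θ)
    (hN : HasDerivAt (Ncv γ) v' θ) :
    HasDerivAt (fmap γ M w) (pmap u' v' w) θ := by
  have h0 : HasDerivAt (fun t => (inner ℝ w (M⁻¹ • deriv γ t) : ℝ)) ((inner ℝ w u' : ℝ)) θ :=
    (innerSL ℝ w).hasFDerivAt.comp_hasDerivAt θ hE
  have h1 : HasDerivAt (fun t => (inner ℝ w (Ncv γ t) : ℝ)) ((inner ℝ w v' : ℝ)) θ :=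
    (innerSL ℝ w).hasFDerivAt.comp_hasDerivAt θ hN
  have hφ : HasDerivAt
      (fun t => (![(inner ℝ w (M⁻¹ • deriv γ t) : ℝ), (inner ℝ w (Ncv γ t) : ℝ)] : Fin 2 → ℝ))
      (![(inner ℝ w u' : ℝ), (inner ℝ w v' : ℝ)]) θ := by
    rw [hasDerivAt_pi]
    intro i
    fin_cases i
    · simpa using h0
    · simpa using h1
  exact (((EuclideanSpace.equiv (Fin 2) ℝ).symm :
      (Fin 2 → ℝ) →L[ℝ] EuclideanSpace ℝ (Fin 2)).hasFDerivAt.comp_hasDerivAt θ hφ)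

end aux

/-- For a non-degenerate C² curve `γ` on `S²`, the family of projection
maps `{f_z : |z| ≤ 1/2}` is cinematic: there are constants `0 < c₀ ≤ C₀ < ∞` depending
only on `γ` such that for all `y, z` in the ball of radius `1/2` and all `θ ∈ [0,1]`,
`c₀|y−z| ≤ |f_y(θ) − f_z(θ)| + |f_y'(θ) − f_z'(θ)| ≤ C₀|y−z|`. -/
theorem stmt8 (γ : ℝ → EuclideanSpace ℝ (Fin 3))
    (hγ : ContDiff ℝ 2 γ)
    (hsphere : ∀ θ ∈ Icc (0:ℝ) 1, ‖γ θ‖ = 1)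
    (hnondeg : ∀ θ ∈ Icc (0:ℝ) 1,
      LinearIndependent ℝ ![γ θ, deriv γ θ, deriv (deriv γ) θ])
    (M : ℝ) (hM : IsGreatest ((fun θ => ‖deriv γ θ‖) '' Icc (0:ℝ) 1) M) :
    ∃ c₀ C₀ : ℝ, 0 < c₀ ∧ c₀ ≤ C₀ ∧
      ∀ y z : EuclideanSpace ℝ (Fin 3), ‖y‖ ≤ 1/2 → ‖z‖ ≤ 1/2 →
        ∀ θ ∈ Icc (0:ℝ) 1,
          c₀ * ‖y - z‖
              ≤ ‖fmap γ M y θ - fmap γ M z θ‖ +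
                ‖deriv (fmap γ M y) θ - deriv (fmap γ M z) θ‖ ∧
          ‖fmap γ M y θ - fmap γ M z θ‖ +
              ‖deriv (fmap γ M y) θ - deriv (fmap γ M z) θ‖
            ≤ C₀ * ‖y - z‖ := by
  -- basic differentiability facts
  have h21 : (2 : WithTop ℕ∞) = 1 + 1 := by norm_num
  have hγ' := (contDiff_succ_iff_deriv.mp (h21 ▸ hγ))
  have hd1 : Differentiable ℝ γ := hγ'.1
  have hder : ContDiff ℝ 1 (deriv γ) := hγ'.2.2
  have hd2 := contDiff_one_iff_deriv.mp hder
  have hDdiff : Differentiable ℝ (deriv γ) := hd2.1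
  have hD2cont : Continuous (deriv (deriv γ)) := hd2.2
  have hDcont : Continuous (deriv γ) := hDdiff.continuous
  -- the open set where deriv γ ≠ 0
  set S : Set ℝ := {θ | deriv γ θ ≠ 0} with hSdef
  have hSopen : IsOpen S := (isClosed_singleton.preimage hDcont).isOpen_compl
  have hIccS : Icc (0:ℝ) 1 ⊆ S := by
    intro θ hθ
    have h := (hnondeg θ hθ).ne_zero 1
    simpa [hSdef] using h
  have hM0 : 0 < M := by
    obtain ⟨θ₀, hθ₀, hMθ₀⟩ := hM.1
    have : deriv γ θ₀ ≠ 0 := hIccS hθ₀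
    rw [← hMθ₀]
    exact norm_pos_iff.mpr this
  -- inner product identities on Icc
  have hdg : ∀ θ, HasDerivAt (fun t => (inner ℝ (γ t) (γ t) : ℝ))
      (2 * (inner ℝ (γ θ) (deriv γ θ) : ℝ)) θ := by
    intro θ
    have h := HasDerivAt.inner ℝ (hd1 θ).hasDerivAt (hd1 θ).hasDerivAt
    refine h.congr_deriv ?_
    rw [real_inner_comm (deriv γ θ) (γ θ)]
    ring
  have hgD : ∀ θ ∈ Icc (0:ℝ) 1, (inner ℝ (γ θ) (deriv γ θ) : ℝ) = 0 := by
    have hg0 : ∀ θ ∈ Ioo (0:ℝ) 1, (inner ℝ (γ θ) (deriv γ θ) : ℝ) = 0 := by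
      intro θ hθ
      have hev : (fun t => (inner ℝ (γ t) (γ t) : ℝ)) =ᶠ[nhds θ] fun _ => (1:ℝ) := by
        filter_upwards [isOpen_Ioo.mem_nhds hθ] with t ht
        have h1 := hsphere t (Ioo_subset_Icc_self ht)
        rw [real_inner_self_eq_norm_mul_norm, h1]; norm_num
      have h1 := hev.deriv_eq
      rw [deriv_const] at h1
      have h2 := (hdg θ).deriv
      rw [h1] at h2
      linarith
    intro θ hθ
    have hgcont : Continuous fun t => (inner ℝ (γ t) (deriv γ t) : ℝ) :=
      hd1.continuous.inner hDcont
    have hcl : Icc (0:ℝ) 1 ⊆ closure (Ioo (0:ℝ) 1) := by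
      rw [closure_Ioo (by norm_num : (0:ℝ) ≠ 1)]
    exact Set.EqOn.closure (fun t ht => hg0 t ht) hgcont continuous_const (hcl hθ)
  have hdg2 : ∀ θ, HasDerivAt (fun t => (inner ℝ (γ t) (deriv γ t) : ℝ))
      ((inner ℝ (γ θ) (deriv (deriv γ) θ) : ℝ) + ‖deriv γ θ‖^2) θ := by
    intro θ
    have h := HasDerivAt.inner ℝ (hd1 θ).hasDerivAt (hDdiff θ).hasDerivAt
    refine h.congr_deriv ?_
    rw [real_inner_self_eq_norm_sq]
  have hgD2 : ∀ θ ∈ Icc (0:ℝ) 1,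
      (inner ℝ (γ θ) (deriv (deriv γ) θ) : ℝ) + ‖deriv γ θ‖^2 = 0 := by
    have hq0 : ∀ θ ∈ Ioo (0:ℝ) 1,
        (inner ℝ (γ θ) (deriv (deriv γ) θ) : ℝ) + ‖deriv γ θ‖^2 = 0 := by
      intro θ hθ
      have hev : (fun t => (inner ℝ (γ t) (deriv γ t) : ℝ)) =ᶠ[nhds θ] fun _ => (0:ℝ) := by
        filter_upwards [isOpen_Ioo.mem_nhds hθ] with t ht
        exact hgD t (Ioo_subset_Icc_self ht)
      have h1 := hev.deriv_eq
      rw [deriv_const] at h1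
      have h2 := (hdg2 θ).deriv
      rw [h1] at h2
      linarith
    intro θ hθ
    have hqcont : Continuous fun t =>
        (inner ℝ (γ t) (deriv (deriv γ) t) : ℝ) + ‖deriv γ t‖^2 :=
      (hd1.continuous.inner hD2cont).add ((hDcont.norm).pow 2)
    have hcl : Icc (0:ℝ) 1 ⊆ closure (Ioo (0:ℝ) 1) := by
      rw [closure_Ioo (by norm_num : (0:ℝ) ≠ 1)]
    exact Set.EqOn.closure (fun t ht => hq0 t ht) hqcont continuous_const (hcl hθ)
  -- differentiability of E and N
  have hE : ∀ θ, HasDerivAt (fun t => M⁻¹ • deriv γ t) (M⁻¹ • deriv (deriv γ) θ) θ :=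
    fun θ => (hDdiff θ).hasDerivAt.const_smul M⁻¹
  have hXcd : ContDiff ℝ 1 (fun θ => cross3 (γ θ) (deriv γ θ)) := by
    have hγ1 : ContDiff ℝ 1 γ := hγ.of_le (by norm_num)
    have cγ : ∀ i, ContDiff ℝ 1 (fun θ => γ θ i) := fun i => contDiff_euclidean.mp hγ1 i
    have cD : ∀ i, ContDiff ℝ 1 (fun θ => deriv γ θ i) := fun i => contDiff_euclidean.mp hder i
    rw [contDiff_euclidean]
    intro i
    fin_cases i
    · exact ((cγ 1).mul (cD 2)).sub ((cγ 2).mul (cD 1))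
    · exact ((cγ 2).mul (cD 0)).sub ((cγ 0).mul (cD 2))
    · exact ((cγ 0).mul (cD 1)).sub ((cγ 1).mul (cD 0))
  have hNcd : ∀ θ ∈ S, ContDiffAt ℝ 1 (Ncv γ) θ := by
    intro θ hθ
    have hn : ContDiffAt ℝ 1 (fun t => ‖deriv γ t‖) θ := hder.contDiffAt.norm ℝ hθ
    have hn' : ContDiffAt ℝ 1 (fun t => (‖deriv γ t‖)⁻¹) θ :=
      hn.inv (norm_ne_zero_iff.mpr hθ)
    exact hn'.smul hXcd.contDiffAt
  have hNcont : ContinuousOn (Ncv γ) S := fun θ hθ =>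
    ((hNcd θ hθ).continuousAt).continuousWithinAt
  have hNcdOn : ContDiffOn ℝ 1 (Ncv γ) S := fun θ hθ => (hNcd θ hθ).contDiffWithinAt
  have hN'cont : ContinuousOn (deriv (Ncv γ)) S :=
    hNcdOn.continuousOn_deriv_of_isOpen hSopen le_rfl
  have hNder : ∀ θ ∈ S, HasDerivAt (Ncv γ) (deriv (Ncv γ) θ) θ := fun θ hθ =>
    ((hNcd θ hθ).differentiableAt one_ne_zero).hasDerivAt
  have key : ∀ (w : EuclideanSpace ℝ (Fin 3)), ∀ θ ∈ S,
      HasDerivAt (fmap γ M w)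
        (pmap (M⁻¹ • deriv (deriv γ) θ) (deriv (Ncv γ) θ) w) θ :=
    fun w θ hθ => fmap_hasDerivAt γ M w θ _ _ (hE θ) (hNder θ hθ)
  -- the quantity F
  set F : EuclideanSpace ℝ (Fin 3) × ℝ → ℝ := fun p =>
    ‖pmap (M⁻¹ • deriv γ p.2) (Ncv γ p.2) p.1‖ +
    ‖pmap (M⁻¹ • deriv (deriv γ) p.2) (deriv (Ncv γ) p.2) p.1‖ with hFdef
  set K : Set (EuclideanSpace ℝ (Fin 3) × ℝ) := Metric.sphere (0 : EuclideanSpace ℝ (Fin 3)) 1 ×ˢ Icc (0:ℝ) 1 with hKdef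
  have hKcomp : IsCompact K := (isCompact_sphere 0 1).prod isCompact_Icc
  have hKne : K.Nonempty := by
    have hs : (Metric.sphere (0 : EuclideanSpace ℝ (Fin 3)) 1).Nonempty :=
      NormedSpace.sphere_nonempty.mpr (by norm_num)
    obtain ⟨w₀, hw₀⟩ := hs
    exact ⟨(w₀, 0), ⟨hw₀, by norm_num⟩⟩
  have hKsub : K ⊆ univ ×ˢ S := by
    intro p hp
    exact ⟨trivial, hIccS hp.2⟩
  have hFcont : ContinuousOn F (univ ×ˢ S) := by
    have hmem : ∀ p : EuclideanSpace ℝ (Fin 3) × ℝ, p ∈ univ ×ˢ S → p.2 ∈ S :=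
      fun p hp => hp.2
    have c1 : ContinuousOn (fun p : EuclideanSpace ℝ (Fin 3) × ℝ =>
        ‖pmap (M⁻¹ • deriv γ p.2) (Ncv γ p.2) p.1‖) (univ ×ˢ S) := by
      have g1 : Continuous (fun p : EuclideanSpace ℝ (Fin 3) × ℝ => M⁻¹ • deriv γ p.2) :=
        (hDcont.comp continuous_snd).const_smul M⁻¹
      have g2 : ContinuousOn (fun p : EuclideanSpace ℝ (Fin 3) × ℝ => Ncv γ p.2) (univ ×ˢ S) :=
        hNcont.comp continuous_snd.continuousOn hmem
      exact ((pmap_cont.comp_continuousOn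
        (g1.continuousOn.prodMk (g2.prodMk continuous_fst.continuousOn)))).norm
    have c2 : ContinuousOn (fun p : EuclideanSpace ℝ (Fin 3) × ℝ =>
        ‖pmap (M⁻¹ • deriv (deriv γ) p.2) (deriv (Ncv γ) p.2) p.1‖) (univ ×ˢ S) := by
      have g1 : Continuous (fun p : EuclideanSpace ℝ (Fin 3) × ℝ =>
          M⁻¹ • deriv (deriv γ) p.2) := (hD2cont.comp continuous_snd).const_smul M⁻¹
      have g2 : ContinuousOn (fun p : EuclideanSpace ℝ (Fin 3) × ℝ =>
          deriv (Ncv γ) p.2) (univ ×ˢ S) := hN'cont.comp continuous_snd.continuousOn hmem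
      exact ((pmap_cont.comp_continuousOn
        (g1.continuousOn.prodMk (g2.prodMk continuous_fst.continuousOn)))).norm
    exact c1.add c2
  -- positivity of F on K
  have hpos : ∀ p ∈ K, 0 < F p := by
    rintro ⟨w, θ⟩ hp
    have hw : ‖w‖ = 1 := mem_sphere_zero_iff_norm.mp hp.1
    have hθ : θ ∈ Icc (0:ℝ) 1 := hp.2
    have hDθ : deriv γ θ ≠ 0 := hIccS hθ
    rcases lt_or_eq_of_le (add_nonneg (norm_nonneg _) (norm_nonneg _) :
        (0:ℝ) ≤ F (w, θ)) with h | h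
    · exact h
    exfalso
    have hF0 : ‖pmap (M⁻¹ • deriv γ θ) (Ncv γ θ) w‖ +
        ‖pmap (M⁻¹ • deriv (deriv γ) θ) (deriv (Ncv γ) θ) w‖ = 0 := by
      simpa [hFdef] using h.symm
    have hn1 := norm_nonneg (pmap (M⁻¹ • deriv γ θ) (Ncv γ θ) w)
    have hn2 := norm_nonneg (pmap (M⁻¹ • deriv (deriv γ) θ) (deriv (Ncv γ) θ) w)
    have hz1 : pmap (M⁻¹ • deriv γ θ) (Ncv γ θ) w = 0 := norm_eq_zero.mp (by linarith)
    have hz2 : pmap (M⁻¹ • deriv (deriv γ) θ) (deriv (Ncv γ) θ) w = 0 :=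
      norm_eq_zero.mp (by linarith)
    obtain ⟨h1, h2⟩ := pmap_eq_zero hz1
    obtain ⟨h3, _⟩ := pmap_eq_zero hz2
    rw [real_inner_smul_right] at h1 h3
    have hMne : M⁻¹ ≠ 0 := inv_ne_zero (ne_of_gt hM0)
    have h1' : (inner ℝ w (deriv γ θ) : ℝ) = 0 := by
      rcases mul_eq_zero.mp h1 with h | h
      · exact absurd h hMne
      · exact h
    have h3' : (inner ℝ w (deriv (deriv γ) θ) : ℝ) = 0 := by
      rcases mul_eq_zero.mp h3 with h | h
      · exact absurd h hMne
      · exact h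
    have h2' : (inner ℝ w (cross3 (γ θ) (deriv γ θ)) : ℝ) = 0 := by
      rw [Ncv, real_inner_smul_right] at h2
      rcases mul_eq_zero.mp h2 with h | h
      · exact absurd h (inv_ne_zero (norm_ne_zero_iff.mpr hDθ))
      · exact h
    have hwγ := perp3 (γ θ) (deriv γ θ) w (hsphere θ hθ) (hgD θ hθ) hDθ h1' h2'
    set c : ℝ := inner ℝ w (γ θ) with hcdef
    have hcne : c ≠ 0 := by
      intro hc
      rw [hc, zero_smul] at hwγ
      rw [hwγ] at hw
      simp at hw
    have hinner : (inner ℝ w (deriv (deriv γ) θ) : ℝ)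
        = c * (inner ℝ (γ θ) (deriv (deriv γ) θ) : ℝ) := by
      conv_lhs => rw [hwγ]
      rw [real_inner_smul_left]
    have hc2 : c * (inner ℝ (γ θ) (deriv (deriv γ) θ) : ℝ) = 0 := by
      rw [← hinner, h3']
    have hq := hgD2 θ hθ
    have hDnorm : (0:ℝ) < ‖deriv γ θ‖^2 := by
      have := norm_pos_iff.mpr hDθ
      positivity
    have hip : (inner ℝ (γ θ) (deriv (deriv γ) θ) : ℝ) = -‖deriv γ θ‖^2 := by linarith
    rw [hip] at hc2
    rcases mul_eq_zero.mp hc2 with h' | h'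
    · exact hcne h'
    · linarith
  -- min and max
  obtain ⟨pmin, hpminK, hmin⟩ := hKcomp.exists_isMinOn hKne (hFcont.mono hKsub)
  obtain ⟨pmax, hpmaxK, hmax⟩ := hKcomp.exists_isMaxOn hKne (hFcont.mono hKsub)
  refine ⟨F pmin, F pmax, hpos pmin hpminK, hmin hpmaxK, ?_⟩
  intro y z hy hz θ hθ
  have hθS : θ ∈ S := hIccS hθ
  have e1 : fmap γ M y θ - fmap γ M z θ = pmap (M⁻¹ • deriv γ θ) (Ncv γ θ) (y - z) := by
    rw [fmap_eq, fmap_eq]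
    exact pmap_sub _ _ _ _
  have e2 : deriv (fmap γ M y) θ - deriv (fmap γ M z) θ =
      pmap (M⁻¹ • deriv (deriv γ) θ) (deriv (Ncv γ) θ) (y - z) := by
    rw [(key y θ hθS).deriv, (key z θ hθS).deriv]
    exact pmap_sub _ _ _ _
  rw [e1, e2]
  by_cases hyz : y - z = 0
  · rw [hyz]
    have hp0 : pmap (M⁻¹ • deriv γ θ) (Ncv γ θ) (0 : EuclideanSpace ℝ (Fin 3)) = 0 := by
      have := pmap_smul (M⁻¹ • deriv γ θ) (Ncv γ θ) 0 0
      simpa using this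
    have hp0' : pmap (M⁻¹ • deriv (deriv γ) θ) (deriv (Ncv γ) θ)
        (0 : EuclideanSpace ℝ (Fin 3)) = 0 := by
      have := pmap_smul (M⁻¹ • deriv (deriv γ) θ) (deriv (Ncv γ) θ) 0 0
      simpa using this
    rw [hp0, hp0']
    simp
  · set t : ℝ := ‖y - z‖ with htdef
    have ht0 : 0 < t := norm_pos_iff.mpr hyz
    set wh : EuclideanSpace ℝ (Fin 3) := t⁻¹ • (y - z) with hwhdef
    have hws : wh ∈ Metric.sphere (0 : EuclideanSpace ℝ (Fin 3)) 1 := by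
      rw [mem_sphere_zero_iff_norm, hwhdef, norm_smul, norm_inv, norm_norm, ← htdef]
      field_simp
    have hwt : y - z = t • wh := by
      rw [hwhdef, smul_smul, mul_inv_cancel₀ (ne_of_gt ht0), one_smul]
    have hKm : (wh, θ) ∈ K := ⟨hws, hθ⟩
    have hmin' : F pmin ≤ F (wh, θ) := hmin hKm
    have hmax' : F (wh, θ) ≤ F pmax := hmax hKm
    have hn1 : ‖pmap (M⁻¹ • deriv γ θ) (Ncv γ θ) (y - z)‖ =
        t * ‖pmap (M⁻¹ • deriv γ θ) (Ncv γ θ) wh‖ := by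
      rw [hwt, pmap_smul, norm_smul, Real.norm_of_nonneg (le_of_lt ht0)]
    have hn2 : ‖pmap (M⁻¹ • deriv (deriv γ) θ) (deriv (Ncv γ) θ) (y - z)‖ =
        t * ‖pmap (M⁻¹ • deriv (deriv γ) θ) (deriv (Ncv γ) θ) wh‖ := by
      rw [hwt, pmap_smul, norm_smul, Real.norm_of_nonneg (le_of_lt ht0)]
    simp only [hFdef] at hmin' hmax' ⊢
    constructor
    · rw [hn1, hn2]
      nlinarith [hmin', ht0]
    · rw [hn1, hn2]
      nlinarith [hmax', ht0]
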